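/- The rhombic dodecahedron graph admits an embedding with scale 1 into ℤ^4 in which every coordinate of the image of every vertex lies in {0,1} (i.e., the rhombic dodecahedron embeds isometrically into the hypercube H_4). -/
import Mathlib

/-- The vertices of the rhombic dodecahedron: the 8 points `(±1, ±1, ±1)` together
with the 6 coordinate permutations of `(±2, 0, 0)`. -/
def RoDoVertex (v : Fin 3 → ℤ) : Prop :=
  (∀ i, |v i| = 1) ∨
  ∃ σ : Equiv.Perm (Fin 3), |v (σ 0)| = 2 ∧ v (σ 1) = 0 ∧ v (σ 2) = 0

/-- The rhombic dodecahedron graph: vertices as above, adjacent iff the squared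
Euclidean distance equals 3. -/
def rhombicDodecahedronGraph : SimpleGraph {v : Fin 3 → ℤ // RoDoVertex v} :=
  SimpleGraph.fromRel (fun v w => ∑ i, (v.val i - w.val i) ^ 2 = 3)

/- ### Auxiliary setup: hypercube bit vectors -/

def bz (b : Bool) : ℤ := if b then 1 else 0

def Utbl : Fin 4 → Fin 3 → ℤ := ![![1,1,1],![1,-1,-1],![-1,1,-1],![-1,-1,1]]

def gg (b : Fin 4 → Bool) (j : Fin 3) : ℤ := ∑ i, bz (b i) * Utbl i j

def good (b : Fin 4 → Bool) : Prop := b ≠ (fun _ => false) ∧ b ≠ (fun _ => true)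

instance : DecidablePred good := fun _ => by unfold good; infer_instance

def ham (b c : Fin 4 → Bool) : ℕ := ∑ i, if b i = c i then 0 else 1

lemma ham_tri : ∀ a b c, ham a c ≤ ham a b + ham b c := by decide

lemma ham_self (b : Fin 4 → Bool) : ham b b = 0 := by simp [ham]

lemma ham0 : ∀ b c, ham b c = 0 → b = c := by decide

lemma gg_inj : ∀ b c, good b → good c → gg b = gg c → b = c := by decide

lemma sq3_iff : ∀ b c, good b → good c →
    ((∑ j, (gg b j - gg c j)^2 = 3) ↔ ham b c = 1) := by decide

lemma step : ∀ b c, good b → good c → b ≠ c →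
    ∃ b', good b' ∧ ham b b' = 1 ∧ ham b' c + 1 = ham b c := by decide

lemma rodo_shape : ∀ b, good b →
    (∀ i, |gg b i| = 1) ∨ ∃ j : Fin 3, |gg b j| = 2 ∧ ∀ k, k ≠ j → gg b k = 0 := by decide

lemma rodo_of_good (b : Fin 4 → Bool) (hb : good b) : RoDoVertex (gg b) := by
  rcases rodo_shape b hb with h | ⟨j, h2, hk⟩
  · exact Or.inl h
  · refine Or.inr ⟨Equiv.swap 0 j, ?_, ?_, ?_⟩
    · rw [Equiv.swap_apply_left]; exact h2
    · refine hk _ (fun e => ?_)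
      have : Equiv.swap 0 j 1 = Equiv.swap 0 j 0 := by
        rw [Equiv.swap_apply_left]; exact e
      exact absurd ((Equiv.swap 0 j).injective this) (by decide)
    · refine hk _ (fun e => ?_)
      have : Equiv.swap 0 j 2 = Equiv.swap 0 j 0 := by
        rw [Equiv.swap_apply_left]; exact e
      exact absurd ((Equiv.swap 0 j).injective this) (by decide)

lemma enum (v : Fin 3 → ℤ) (hv : RoDoVertex v) : ∃ b, good b ∧ gg b = v := by
  have hv3 : v = ![v 0, v 1, v 2] := by
    funext i; fin_cases i <;> rfl
  rcases hv with h | ⟨σ, h2, hz1, hz2⟩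
  · rcases (abs_eq (by norm_num)).mp (h 0) with h0 | h0 <;>
      rcases (abs_eq (by norm_num)).mp (h 1) with h1 | h1 <;>
      rcases (abs_eq (by norm_num)).mp (h 2) with hc | hc <;>
      rw [h0, h1, hc] at hv3 <;> rw [hv3] <;> decide
  · have hk : ∀ k, k ≠ σ 0 → v k = 0 := by
      intro k hkk
      have h1 : σ.symm k ≠ 0 := by
        intro e
        exact hkk (by rw [← Equiv.apply_symm_apply σ k, e])
      rcases (by decide : ∀ m : Fin 3, m ≠ 0 → m = 1 ∨ m = 2) _ h1 with e | e
      · rw [← Equiv.apply_symm_apply σ k, e]; exact hz1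
      · rw [← Equiv.apply_symm_apply σ k, e]; exact hz2
    rcases (by decide : ∀ m : Fin 3, m = 0 ∨ m = 1 ∨ m = 2) (σ 0) with e | e | e <;>
      rw [e] at h2 hk <;>
      [ (have hb : v 1 = 0 := hk 1 (by decide); have hc : v 2 = 0 := hk 2 (by decide));
        (have hb : v 0 = 0 := hk 0 (by decide); have hc : v 2 = 0 := hk 2 (by decide));
        (have hb : v 0 = 0 := hk 0 (by decide); have hc : v 1 = 0 := hk 1 (by decide))] <;>
      rcases (abs_eq (by norm_num)).mp h2 with ha | ha <;>
      rw [ha, hb, hc] at hv3 <;> rw [hv3] <;> decide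

noncomputable def Fb (v : {v : Fin 3 → ℤ // RoDoVertex v}) : Fin 4 → Bool :=
  Classical.choose (enum v.val v.2)

lemma Fb_good (v : {v : Fin 3 → ℤ // RoDoVertex v}) : good (Fb v) :=
  (Classical.choose_spec (enum v.val v.2)).1

lemma Fb_gg (v : {v : Fin 3 → ℤ // RoDoVertex v}) : gg (Fb v) = v.val :=
  (Classical.choose_spec (enum v.val v.2)).2

lemma Fb_inj {u v : {v : Fin 3 → ℤ // RoDoVertex v}} (h : Fb u = Fb v) : u = v := by
  apply Subtype.ext
  rw [← Fb_gg u, ← Fb_gg v, h]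

lemma adj_iff (u v : {v : Fin 3 → ℤ // RoDoVertex v}) :
    rhombicDodecahedronGraph.Adj u v ↔ ham (Fb u) (Fb v) = 1 := by
  rw [rhombicDodecahedronGraph, SimpleGraph.fromRel_adj]
  constructor
  · rintro ⟨hne, h | h⟩
    · exact (sq3_iff _ _ (Fb_good u) (Fb_good v)).mp (by rw [Fb_gg, Fb_gg]; exact h)
    · refine (sq3_iff _ _ (Fb_good u) (Fb_good v)).mp ?_
      rw [Fb_gg, Fb_gg]
      rw [← h]
      exact Finset.sum_congr rfl (fun i _ => by ring)
  · intro h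
    have hne : Fb u ≠ Fb v := by
      intro e; rw [e, ham_self] at h; exact absurd h (by norm_num)
    exact ⟨fun e => hne (congrArg Fb e), Or.inl (by
      rw [← Fb_gg u, ← Fb_gg v]
      exact (sq3_iff _ _ (Fb_good u) (Fb_good v)).mpr h)⟩

lemma walk_ge {u v : {v : Fin 3 → ℤ // RoDoVertex v}}
    (p : rhombicDodecahedronGraph.Walk u v) : ham (Fb u) (Fb v) ≤ p.length := by
  induction p with
  | nil => simp [ham_self]
  | @cons a b c h p ih =>
    have h1 : ham (Fb a) (Fb b) = 1 := (adj_iff a b).mp h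
    have := ham_tri (Fb a) (Fb b) (Fb c)
    rw [SimpleGraph.Walk.length_cons]
    omega

lemma reach_and_dist : ∀ n (u v : {v : Fin 3 → ℤ // RoDoVertex v}),
    ham (Fb u) (Fb v) = n →
    rhombicDodecahedronGraph.Reachable u v ∧ rhombicDodecahedronGraph.dist u v ≤ n := by
  intro n
  induction n with
  | zero =>
    intro u v h
    have : u = v := Fb_inj (ham0 _ _ h)
    subst this
    exact ⟨SimpleGraph.Reachable.refl u, by rw [SimpleGraph.dist_self]⟩
  | succ n ih =>
    intro u v h
    have hne : Fb u ≠ Fb v := by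
      intro e; rw [e, ham_self] at h; exact absurd h.symm (by omega)
    obtain ⟨b', hb', h1, h2⟩ := step (Fb u) (Fb v) (Fb_good u) (Fb_good v) hne
    set w : {v : Fin 3 → ℤ // RoDoVertex v} := ⟨gg b', rodo_of_good b' hb'⟩ with hw
    have hFw : Fb w = b' := gg_inj _ _ (Fb_good w) hb' (by rw [Fb_gg])
    have hadj : rhombicDodecahedronGraph.Adj u w := (adj_iff u w).mpr (by rw [hFw]; exact h1)
    have hham : ham (Fb w) (Fb v) = n := by rw [hFw]; omega
    obtain ⟨hr, hd⟩ := ih w v hham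
    refine ⟨hadj.reachable.trans hr, ?_⟩
    obtain ⟨q, hq⟩ := hr.exists_walk_length_eq_dist
    have := rhombicDodecahedronGraph.dist_le (SimpleGraph.Walk.cons hadj q)
    rw [SimpleGraph.Walk.length_cons, hq] at this
    omega

/-- The rhombic dodecahedron graph embeds isometrically (scale 1) into
the hypercube `H_4 ⊆ ℤ^4` (all coordinates in `{0,1}`). -/
theorem rhombicDodecahedron_embeds_hypercube :
    ∃ f : {v : Fin 3 → ℤ // RoDoVertex v} → Fin 4 → ℤ,
      (∀ v i, f v i = 0 ∨ f v i = 1) ∧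
      ∀ u v, (rhombicDodecahedronGraph.dist u v : ℤ) = ∑ i, |f u i - f v i| := by
  refine ⟨fun v i => bz (Fb v i), fun v i => by simp only [bz]; split <;> simp, fun u v => ?_⟩
  have hsum : (∑ i, |bz (Fb u i) - bz (Fb v i)|) = (ham (Fb u) (Fb v) : ℤ) := by
    rw [ham]
    push_cast
    refine Finset.sum_congr rfl (fun i _ => ?_)
    cases h1 : Fb u i <;> cases h2 : Fb v i <;> simp [bz]
  rw [hsum]
  obtain ⟨hr, hd⟩ := reach_and_dist (ham (Fb u) (Fb v)) u v rfl
  obtain ⟨p, hp⟩ := hr.exists_walk_length_eq_dist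
  have hge := walk_ge p
  rw [hp] at hge
  have : rhombicDodecahedronGraph.dist u v = ham (Fb u) (Fb v) := le_antisymm hd hge
  rw [this]
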